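/- arXiv:2210.11037 — 3 statements merged into one kernel-verified Lean document; each statement's English description precedes it below -/
import Mathlib

section
/- Let a ≥ 2 and let H = H_1 ∪ H_2 be the disjoint union of two trees H_1 and H_2, each on 2a vertices and each having both bipartition classes of size exactly a. Then for every n ≥ 2a, f(n,H) ≥ binom(2a−1, 2) + (2a−1)(n−2a+1). -/
open SimpleGraph Finset

lemma filter_lt_card (n m : ℕ) (h : m ≤ n) :
    (Finset.univ.filter fun x : Fin n => (x : ℕ) < m).card = m := by
  have hb : ∀ k ∈ Finset.range m, k < n := fun k hk =>
    lt_of_lt_of_le (Finset.mem_range.mp hk) h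
  have : (Finset.univ.filter fun x : Fin n => (x : ℕ) < m)
      = (Finset.range m).attachFin hb := by
    ext x; simp [Finset.mem_attachFin]
  rw [this, Finset.card_attachFin, Finset.card_range]

lemma const_on_preconnected {V : Type*} (G : SimpleGraph V) (hG : G.Preconnected)
    (P : V → Prop) (hP : ∀ u v, G.Adj u v → (P u ↔ P v)) (u v : V) : P u ↔ P v := by
  obtain ⟨w⟩ := hG u v
  induction w with
  | nil => rfl
  | cons h _ ih => exact (hP _ _ h).trans ih

lemma count_in_X {V W : Type*} [Fintype V] [DecidableEq V] [DecidableEq W]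
    (T : SimpleGraph V) (hT : T.Connected)
    (a : ℕ) (A : Finset V) (hA : A.card = a) (hcardV : Fintype.card V = 2 * a)
    (g : V → W) (X : Finset W)
    (hflip : ∀ u v : V, T.Adj u v → ((g u ∈ X) ↔ (g v ∉ X)))
    (hbal : ∀ u v, T.Adj u v → (u ∈ A ↔ v ∉ A)) :
    (Finset.univ.filter fun v => g v ∈ X).card = a := by
  classical
  have hne : Nonempty V := hT.nonempty
  obtain ⟨v₀⟩ := hne
  have hconst : ∀ v : V, ((v ∈ A ↔ g v ∈ X)) ↔ ((v₀ ∈ A ↔ g v₀ ∈ X)) := by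
    intro v
    refine const_on_preconnected T hT.preconnected (fun v => (v ∈ A ↔ g v ∈ X)) ?_ v v₀
    intro u v huv
    have h1 := hflip u v huv
    have h2 := hbal u v huv
    tauto
  by_cases hc : v₀ ∈ A ↔ g v₀ ∈ X
  · have : (Finset.univ.filter fun v => g v ∈ X) = A := by
      ext v
      have := hconst v
      simp only [Finset.mem_filter, Finset.mem_univ, true_and]
      tauto
    rw [this, hA]
  · have : (Finset.univ.filter fun v => g v ∈ X) = Aᶜ := by
      ext v
      have := hconst v
      simp only [Finset.mem_filter, Finset.mem_univ, true_and, Finset.mem_compl]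
      tauto
    rw [this, Finset.card_compl, hA, hcardV]
    omega

lemma side_const {V W : Type*} (T : SimpleGraph V) (hT : T.Connected)
    (g : V → W) (X : Finset W)
    (heq : ∀ u v, T.Adj u v → ((g u ∈ X) ↔ (g v ∈ X))) :
    (∀ v, g v ∈ X) ∨ (∀ v, g v ∉ X) := by
  obtain ⟨v₀⟩ := hT.nonempty
  by_cases h : g v₀ ∈ X
  · left; intro v
    exact (const_on_preconnected T hT.preconnected (fun v => g v ∈ X) heq v v₀).mpr h
  · right; intro v hv
    exact h ((const_on_preconnected T hT.preconnected (fun v => g v ∈ X) heq v v₀).mp hv)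

lemma no_copy_cross {V₁ V₂ W : Type*} [Fintype V₁] [Fintype V₂] [DecidableEq W]
    (a : ℕ) (ha : 1 ≤ a) (H₁ : SimpleGraph V₁) (H₂ : SimpleGraph V₂)
    (h₁conn : H₁.Connected) (h₂conn : H₂.Connected)
    (h₁card : Fintype.card V₁ = 2 * a) (h₂card : Fintype.card V₂ = 2 * a)
    (A₁ : Finset V₁) (hA₁ : A₁.card = a) (hbal₁ : ∀ u v, H₁.Adj u v → (u ∈ A₁ ↔ v ∉ A₁))
    (A₂ : Finset V₂) (hA₂ : A₂.card = a) (hbal₂ : ∀ u v, H₂.Adj u v → (u ∈ A₂ ↔ v ∉ A₂))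
    (G : SimpleGraph W) (X : Finset W) (hX : X.card = 2 * a - 1)
    (hGadj : ∀ x y, G.Adj x y → ((x ∈ X) ↔ (y ∉ X)))
    (f : (H₁.sum H₂) →g G) (hf : Function.Injective f) : False := by
  classical
  set g₁ : V₁ → W := fun v => f (Sum.inl v) with hg₁
  set g₂ : V₂ → W := fun v => f (Sum.inr v) with hg₂
  have hflip₁ : ∀ u v : V₁, H₁.Adj u v → ((g₁ u ∈ X) ↔ (g₁ v ∉ X)) := by
    intro u v huv
    exact hGadj _ _ (f.map_adj (by simpa using huv))
  have hflip₂ : ∀ u v : V₂, H₂.Adj u v → ((g₂ u ∈ X) ↔ (g₂ v ∉ X)) := by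
    intro u v huv
    exact hGadj _ _ (f.map_adj (by simpa using huv))
  have hc₁ := count_in_X H₁ h₁conn a A₁ hA₁ h₁card g₁ X hflip₁ hbal₁
  have hc₂ := count_in_X H₂ h₂conn a A₂ hA₂ h₂card g₂ X hflip₂ hbal₂
  have hinj₁ : Function.Injective g₁ := fun u v h => by
    simpa using hf (a₁ := Sum.inl u) (a₂ := Sum.inl v) h
  have hinj₂ : Function.Injective g₂ := fun u v h => by
    simpa using hf (a₁ := Sum.inr u) (a₂ := Sum.inr v) h
  set S₁ := (Finset.univ.filter fun v => g₁ v ∈ X).image g₁ with hS₁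
  set S₂ := (Finset.univ.filter fun v => g₂ v ∈ X).image g₂ with hS₂
  have hcS₁ : S₁.card = a := by
    rw [hS₁, Finset.card_image_of_injective _ hinj₁, hc₁]
  have hcS₂ : S₂.card = a := by
    rw [hS₂, Finset.card_image_of_injective _ hinj₂, hc₂]
  have hsub : S₁ ∪ S₂ ⊆ X := by
    intro x hx
    rcases Finset.mem_union.mp hx with hx | hx <;>
    · obtain ⟨v, hv, rfl⟩ := Finset.mem_image.mp hx
      exact (Finset.mem_filter.mp hv).2
  have hdisj : Disjoint S₁ S₂ := by
    rw [Finset.disjoint_left]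
    rintro x hx₁ hx₂
    obtain ⟨v, _, rfl⟩ := Finset.mem_image.mp hx₁
    obtain ⟨u, _, hu⟩ := Finset.mem_image.mp hx₂
    exact absurd (hf hu) (by simp)
  have := Finset.card_le_card hsub
  rw [Finset.card_union_of_disjoint hdisj, hcS₁, hcS₂, hX] at this
  omega

lemma copy_avoids_key {V W : Type*} [Fintype V] [DecidableEq W] (a : ℕ) (ha : 1 ≤ a)
    (T : SimpleGraph V) (hT : T.Connected) (X : Finset W) (hX : X.card = 2 * a - 1)
    (hc : Fintype.card V = 2 * a) (g : V → W) (hg : Function.Injective g)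
    (heq : ∀ u v, T.Adj u v → ((g u ∈ X) ↔ (g v ∈ X))) : ∀ v, g v ∉ X := by
  rcases side_const T hT g X heq with hall | hall
  · exfalso
    have hsub : Finset.univ.image g ⊆ X := by
      intro x hx
      obtain ⟨v, _, rfl⟩ := Finset.mem_image.mp hx
      exact hall v
    have := Finset.card_le_card hsub
    rw [Finset.card_image_of_injective _ hg, Finset.card_univ, hc, hX] at this
    omega
  · exact hall

lemma copy_avoids {V₁ V₂ W : Type*} [Fintype V₁] [Fintype V₂] [DecidableEq W]
    (a : ℕ) (ha : 1 ≤ a) (H₁ : SimpleGraph V₁) (H₂ : SimpleGraph V₂)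
    (h₁conn : H₁.Connected) (h₂conn : H₂.Connected)
    (h₁card : Fintype.card V₁ = 2 * a) (h₂card : Fintype.card V₂ = 2 * a)
    (G : SimpleGraph W) (X : Finset W) (hX : X.card = 2 * a - 1)
    (hGadj : ∀ x y, G.Adj x y → ((x ∈ X) ↔ (y ∈ X)))
    (f : (H₁.sum H₂) →g G) (hf : Function.Injective f) : ∀ w, f w ∉ X := by
  classical
  have h₁ : ∀ v, f (Sum.inl v) ∉ X := by
    refine copy_avoids_key a ha H₁ h₁conn X hX h₁card (fun v => f (Sum.inl v)) ?_ ?_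
    · intro u v h
      simpa using hf h
    · intro u v huv
      exact hGadj _ _ (f.map_adj (by simpa using huv))
  have h₂ : ∀ v, f (Sum.inr v) ∉ X := by
    refine copy_avoids_key a ha H₂ h₂conn X hX h₂card (fun v => f (Sum.inr v)) ?_ ?_
    · intro u v h
      simpa using hf h
    · intro u v huv
      exact hGadj _ _ (f.map_adj (by simpa using huv))
  rintro (v | v) <;> [exact h₁ v; exact h₂ v]

def auxGraph {W : Type*} [DecidableEq W] (X : Finset W) : SimpleGraph W where
  Adj x y := x ≠ y ∧ (x ∈ X ∨ y ∈ X)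
  symm := ⟨by
    rintro x y ⟨h1, h2⟩
    exact ⟨h1.symm, h2.symm⟩⟩
  loopless := ⟨by
    rintro x ⟨h1, _⟩
    exact h1 rfl⟩

instance {W : Type*} [DecidableEq W] (X : Finset W) : DecidableRel (auxGraph X).Adj :=
  fun x y => inferInstanceAs (Decidable (x ≠ y ∧ (x ∈ X ∨ y ∈ X)))

lemma auxGraph_adj {W : Type*} [DecidableEq W] (X : Finset W) (x y : W) :
    (auxGraph X).Adj x y ↔ x ≠ y ∧ (x ∈ X ∨ y ∈ X) := Iff.rfl

lemma two_mul_choose_two (b : ℕ) : 2 * ((b + 1).choose 2) = (b + 1) * b := by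
  rw [Nat.choose_two_right, Nat.add_sub_cancel, Nat.mul_div_cancel']
  rcases Nat.even_mul_succ_self b with ⟨k, hk⟩
  exact ⟨k, by rw [Nat.mul_comm (b + 1) b]; omega⟩

lemma count_aux (a n : ℕ) (ha : 1 ≤ a) (hn : 2 * a ≤ n) :
    2 * ((2 * a - 1).choose 2 + (2 * a - 1) * (n - 2 * a + 1)) =
      (2 * a - 1) * (n - 1) + (n - (2 * a - 1)) * (2 * a - 1) := by
  obtain ⟨b, hb⟩ : ∃ b, 2 * a - 1 = b + 1 := ⟨2 * a - 2, by omega⟩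
  obtain ⟨m, hm⟩ : ∃ m, n = 2 * a - 1 + m := ⟨n - (2 * a - 1), by omega⟩
  have h1 : n - 2 * a + 1 = m := by omega
  have h2 : n - 1 = b + m := by omega
  have h3 : n - (b + 1) = m := by omega
  rw [hb, h1, h2, h3]

  calc 2 * ((b + 1).choose 2 + (b + 1) * m)
      = 2 * ((b + 1).choose 2) + 2 * ((b + 1) * m) := by ring
    _ = (b + 1) * b + 2 * ((b + 1) * m) := by rw [two_mul_choose_two]
    _ = (b + 1) * (b + m) + m * (b + 1) := by ring

lemma auxGraph_degree_mem {W : Type*} [Fintype W] [DecidableEq W] (X : Finset W)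
    (x : W) (hx : x ∈ X) : (auxGraph X).degree x = Fintype.card W - 1 := by
  rw [← SimpleGraph.card_neighborFinset_eq_degree]
  have : (auxGraph X).neighborFinset x = Finset.univ.erase x := by
    ext y
    simp [SimpleGraph.mem_neighborFinset, auxGraph_adj, hx, eq_comm, ne_comm]
  rw [this, Finset.card_erase_of_mem (Finset.mem_univ x), Finset.card_univ]

lemma auxGraph_degree_not_mem {W : Type*} [Fintype W] [DecidableEq W] (X : Finset W)
    (x : W) (hx : x ∉ X) : (auxGraph X).degree x = X.card := by
  rw [← SimpleGraph.card_neighborFinset_eq_degree]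
  have : (auxGraph X).neighborFinset x = X := by
    ext y
    simp only [SimpleGraph.mem_neighborFinset, auxGraph_adj]
    constructor
    · tauto
    · intro hy
      exact ⟨fun h => hx (h ▸ hy), Or.inr hy⟩
  rw [this]

lemma auxGraph_card_edges {W : Type*} [Fintype W] [DecidableEq W] (X : Finset W)
    (a n : ℕ) (ha : 1 ≤ a) (hn : 2 * a ≤ n) (hW : Fintype.card W = n)
    (hX : X.card = 2 * a - 1) :
    (auxGraph X).edgeFinset.card = (2 * a - 1).choose 2 + (2 * a - 1) * (n - 2 * a + 1) := by
  have hsum := (auxGraph X).sum_degrees_eq_twice_card_edges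
  have hdeg : ∀ x : W, (auxGraph X).degree x = if x ∈ X then n - 1 else 2 * a - 1 := by
    intro x
    by_cases hx : x ∈ X
    · rw [auxGraph_degree_mem X x hx, hW, if_pos hx]
    · rw [auxGraph_degree_not_mem X x hx, hX, if_neg hx]
  rw [Finset.sum_congr rfl (fun x _ => hdeg x), Finset.sum_ite, Finset.sum_const,
    Finset.sum_const, Finset.filter_univ_mem] at hsum
  have hcompl : (Finset.univ.filter fun x : W => x ∉ X).card = n - (2 * a - 1) := by
    have : (Finset.univ.filter fun x : W => x ∉ X) = Xᶜ := by
      ext y; simp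
    rw [this, Finset.card_compl, hX, hW]
  rw [hcompl, hX] at hsum
  simp only [smul_eq_mul] at hsum
  have := count_aux a n ha hn
  omega



/-- The edge `e` of `G` is contained in a copy of `H` inside `G`. -/
def EdgeInCopy {W V : Type*} (H : SimpleGraph W) (G : SimpleGraph V) (e : Sym2 V) : Prop :=
  ∃ f : H →g G, Function.Injective f ∧ ∃ e' ∈ H.edgeSet, e = e'.map f

/-- `G` contains a copy of `H` (a subgraph isomorphic to `H`). -/
def HasCopy {W V : Type*} (H : SimpleGraph W) (G : SimpleGraph V) : Prop :=
  ∃ f : H →g G, Function.Injective f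

/-- The Turán number `ex(n, H)`. -/
noncomputable def exNum {W : Type*} (n : ℕ) (H : SimpleGraph W) : ℕ :=
  sSup {m | ∃ G : SimpleGraph (Fin n), ¬ HasCopy H G ∧ m = G.edgeSet.ncard}

/-- The graph formed by the edges of color `i` of an edge-coloring `c` of `K_n`. -/
def colorGraph {n : ℕ} {κ : Type*} (c : Sym2 (Fin n) → κ) (i : κ) : SimpleGraph (Fin n) where
  Adj x y := x ≠ y ∧ c s(x, y) = i
  symm := ⟨fun x y => by
    rintro ⟨hxy, hc⟩
    exact ⟨hxy.symm, by rwa [Sym2.eq_swap]⟩⟩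
  loopless := ⟨fun x => by simp⟩

/-- The set of NIM-`H` edges of `K_n` under the `k`-edge-coloring `c`. -/
def nimEdges {W : Type*} (n k : ℕ) (H : SimpleGraph W) (c : Sym2 (Fin n) → Fin k) :
    Set (Sym2 (Fin n)) :=
  {e | e ∈ (⊤ : SimpleGraph (Fin n)).edgeSet ∧ ∀ i : Fin k, ¬ EdgeInCopy H (colorGraph c i) e}

/-- `f_k(n, H)`: the maximum number of NIM-`H` edges over all `k`-edge-colorings of `K_n`. -/
noncomputable def nimNum {W : Type*} (k n : ℕ) (H : SimpleGraph W) : ℕ :=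
  sSup {m | ∃ c : Sym2 (Fin n) → Fin k, m = (nimEdges n k H c).ncard}


/-- Let `a ≥ 2` and let `H = H₁ ∪ H₂` be the disjoint union of two trees, each on `2a`
vertices and each having both bipartition classes of size exactly `a`. Then for every
`n ≥ 2a`, `f(n, H) ≥ (2a-1).choose 2 + (2a-1)(n-2a+1)`. -/
theorem nim_lower_bound_balanced_trees {V₁ V₂ : Type*} [Fintype V₁] [Fintype V₂]
    (a : ℕ) (ha : 2 ≤ a)
    (H₁ : SimpleGraph V₁) (H₂ : SimpleGraph V₂)
    (h₁tree : H₁.IsTree) (h₂tree : H₂.IsTree)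
    (h₁card : Fintype.card V₁ = 2 * a) (h₂card : Fintype.card V₂ = 2 * a)
    (h₁bal : ∃ A : Finset V₁, A.card = a ∧ ∀ u v, H₁.Adj u v → (u ∈ A ↔ v ∉ A))
    (h₂bal : ∃ A : Finset V₂, A.card = a ∧ ∀ u v, H₂.Adj u v → (u ∈ A ↔ v ∉ A))
    (n : ℕ) (hn : 2 * a ≤ n) :
    (2 * a - 1).choose 2 + (2 * a - 1) * (n - 2 * a + 1) ≤ nimNum 2 n (H₁.sum H₂) := by
  classical
  obtain ⟨A₁, hA₁, hbal₁⟩ := h₁bal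
  obtain ⟨A₂, hA₂, hbal₂⟩ := h₂bal
  set X : Finset (Fin n) := Finset.univ.filter (fun x => (x : ℕ) < 2 * a - 1) with hXdef
  have hX : X.card = 2 * a - 1 := filter_lt_card n (2 * a - 1) (by omega)
  set c : Sym2 (Fin n) → Fin 2 :=
    Sym2.lift ⟨fun x y => if ((x ∈ X) ↔ (y ∈ X)) then 1 else 0,
      fun x y => by by_cases h : x ∈ X <;> by_cases h' : y ∈ X <;> simp [h, h']⟩ with hcdef
  have hc : ∀ x y : Fin n, c s(x, y) = if ((x ∈ X) ↔ (y ∈ X)) then 1 else 0 :=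
    fun x y => rfl
  have hc0 : ∀ x y : Fin n, c s(x, y) = 0 ↔ ¬((x ∈ X) ↔ (y ∈ X)) := by
    intro x y
    rw [hc]
    split_ifs with h <;> simp [h]
  have hc1 : ∀ x y : Fin n, c s(x, y) = 1 ↔ ((x ∈ X) ↔ (y ∈ X)) := by
    intro x y
    rw [hc]
    split_ifs with h <;> simp [h]
  have hsub : (auxGraph X).edgeSet ⊆ nimEdges n 2 (H₁.sum H₂) c := by
    intro e he
    induction e using Sym2.ind with
    | _ x y =>
      rw [SimpleGraph.mem_edgeSet, auxGraph_adj] at he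
      obtain ⟨hxy, hmem⟩ := he
      refine ⟨by simp [hxy], ?_⟩
      intro i
      fin_cases i
      · rintro ⟨f, hf, -⟩
        refine no_copy_cross a (by omega) H₁ H₂ h₁tree.isConnected h₂tree.isConnected
          h₁card h₂card A₁ hA₁ hbal₁ A₂ hA₂ hbal₂ _ X hX ?_ f hf
        rintro u v ⟨-, huv2⟩
        have h0 : c s(u, v) = 0 := huv2
        rw [hc0] at h0
        tauto
      · rintro ⟨f, hf, e', he', heq⟩
        have hadj1 : ∀ u v : Fin n, (colorGraph c 1).Adj u v → ((u ∈ X) ↔ (v ∈ X)) := by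
          rintro u v ⟨-, huv2⟩
          rwa [hc1] at huv2
        have havoid := copy_avoids a (by omega) H₁ H₂ h₁tree.isConnected h₂tree.isConnected
          h₁card h₂card _ X hX hadj1 f hf
        induction e' using Sym2.ind with
        | _ u v =>
          rw [Sym2.map_pair_eq, Sym2.eq_iff] at heq
          rcases hmem with hx | hy
          · rcases heq with ⟨rfl, -⟩ | ⟨rfl, -⟩
            · exact havoid _ hx
            · exact havoid _ hx
          · rcases heq with ⟨-, rfl⟩ | ⟨-, rfl⟩
            · exact havoid _ hy
            · exact havoid _ hy
  have hcard : ((auxGraph X).edgeSet).ncard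
      = (2 * a - 1).choose 2 + (2 * a - 1) * (n - 2 * a + 1) := by
    rw [← SimpleGraph.coe_edgeFinset, Set.ncard_coe_finset]
    exact auxGraph_card_edges X a n (by omega) hn (by simp) hX
  have hbdd : BddAbove {m | ∃ c' : Sym2 (Fin n) → Fin 2,
      m = (nimEdges n 2 (H₁.sum H₂) c').ncard} := by
    refine ⟨Nat.card (Sym2 (Fin n)), ?_⟩
    rintro m ⟨c', rfl⟩
    calc (nimEdges n 2 (H₁.sum H₂) c').ncard
        ≤ (Set.univ : Set (Sym2 (Fin n))).ncard :=
          Set.ncard_le_ncard (Set.subset_univ _) Set.finite_univ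
      _ = Nat.card (Sym2 (Fin n)) := by rw [Set.ncard_univ]
  calc (2 * a - 1).choose 2 + (2 * a - 1) * (n - 2 * a + 1)
      = ((auxGraph X).edgeSet).ncard := hcard.symm
    _ ≤ (nimEdges n 2 (H₁.sum H₂) c).ncard := Set.ncard_le_ncard hsub (Set.toFinite _)
    _ ≤ nimNum 2 n (H₁.sum H₂) := le_csSup hbdd ⟨c, rfl⟩
end

section
/- Let H be a bipartite graph containing a tail, let c be a red-blue coloring of the edges of K_n, and let K be a blue clique in K_n of maximum size, with |V(K)| ≥ |V(H)|. Let Y be the set of vertices of K_n outside K that have at least one blue neighbor in V(K), and let X = V(K_n) \ (V(K) ∪ Y). Then every blue edge of K_n that does not have both endpoints in X is contained in a blue copy of H; consequently, every blue NIM-H edge has both endpoints in X. -/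
open SimpleGraph

/-- `H` has a tail: a path `v₀ v₁ v₂` such that `v₂` is adjacent only to `v₁` and
`v₁` is adjacent only to `v₀` and `v₂`. -/
def HasTail {W : Type*} (H : SimpleGraph W) : Prop :=
  ∃ v₀ v₁ v₂ : W, H.Adj v₀ v₁ ∧ H.Adj v₁ v₂ ∧ v₀ ≠ v₂ ∧
    (∀ w, H.Adj v₂ w → w = v₁) ∧ (∀ w, H.Adj v₁ w → w = v₀ ∨ w = v₂)

/-- Key lemma: if `a b` is a blue edge and `u ∈ K` is a blue neighbor of `a`
distinct from `a` and `b`, then `s(a,b)` is in a blue copy of `H`. -/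
lemma key_blue_copy {W : Type*} [Fintype W] (H : SimpleGraph W) (htail : HasTail H)
    {n : ℕ} (c : Sym2 (Fin n) → Bool) (K : Finset (Fin n))
    (hK : (colorGraph c true).IsClique ↑K) (hKbig : Fintype.card W ≤ K.card)
    (a b u : Fin n) (hab : a ≠ b) (hcab : c s(a,b) = true)
    (hu : u ∈ K) (hua : u ≠ a) (hub : u ≠ b) (hcau : c s(a,u) = true) :
    EdgeInCopy H (colorGraph c true) s(a,b) := by
  classical
  obtain ⟨v₀, v₁, v₂, h01, h12, h02, hv2, hv1⟩ := htail
  have h01' : v₀ ≠ v₁ := h01.ne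
  have h12' : v₁ ≠ v₂ := h12.ne
  set S : Finset (Fin n) := ((K.erase u).erase a).erase b with hSdef
  have hSK : ∀ x ∈ S, x ∈ K := fun x hx =>
    Finset.mem_of_mem_erase (Finset.mem_of_mem_erase (Finset.mem_of_mem_erase hx))
  have hSb : ∀ x ∈ S, x ≠ b := fun x hx => Finset.ne_of_mem_erase hx
  have hSa : ∀ x ∈ S, x ≠ a := fun x hx =>
    Finset.ne_of_mem_erase (Finset.mem_of_mem_erase hx)
  have hSu : ∀ x ∈ S, x ≠ u := fun x hx =>
    Finset.ne_of_mem_erase (Finset.mem_of_mem_erase (Finset.mem_of_mem_erase hx))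
  have hScard : K.card - 3 ≤ S.card := by
    have h1 : K.card - 1 ≤ (K.erase u).card := Finset.pred_card_le_card_erase
    have h2 : (K.erase u).card - 1 ≤ ((K.erase u).erase a).card :=
      Finset.pred_card_le_card_erase
    have h3 : ((K.erase u).erase a).card - 1 ≤ S.card := Finset.pred_card_le_card_erase
    omega
  set T : Finset W := ({v₀, v₁, v₂} : Finset W)ᶜ with hTdef
  have hT3 : ({v₀, v₁, v₂} : Finset W).card = 3 :=
    Finset.card_eq_three.mpr ⟨v₀, v₁, v₂, h01', h02, h12', rfl⟩
  have hTcard : T.card = Fintype.card W - 3 := by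
    rw [hTdef, Finset.card_compl, hT3]
  have hcardle : T.card ≤ S.card := by
    rw [hTcard]; omega
  have hcard' : Fintype.card ↥T ≤ Fintype.card ↥S := by
    simpa [Fintype.card_coe] using hcardle
  obtain ⟨g⟩ : Nonempty (↥T ↪ ↥S) := Function.Embedding.nonempty_iff_card_le.mpr hcard'
  have hmemT : ∀ w : W, w ≠ v₀ → w ≠ v₁ → w ≠ v₂ → w ∈ T := by
    intro w h0 h1 h2
    simp only [hTdef, Finset.mem_compl, Finset.mem_insert, Finset.mem_singleton]
    tauto
  set f : W → Fin n := fun w =>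
    if w = v₁ then a else if w = v₂ then b else if w = v₀ then u
    else if h : w ∈ T then (g ⟨w, h⟩ : Fin n) else a with hfdef
  have hf1 : f v₁ = a := by simp [hfdef]
  have hf2 : f v₂ = b := by simp [hfdef, Ne.symm h12']
  have hf0 : f v₀ = u := by simp [hfdef, h01', h02]
  have hfg : ∀ (w : W) (h0 : w ≠ v₀) (h1 : w ≠ v₁) (h2 : w ≠ v₂), f w = (g ⟨w, hmemT w h0 h1 h2⟩ : Fin n) := by
    intro w h0 h1 h2
    simp only [hfdef, if_neg h1, if_neg h2, if_neg h0, dif_pos (hmemT w h0 h1 h2)]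
  have hfS : ∀ w : W, w ≠ v₀ → w ≠ v₁ → w ≠ v₂ → f w ∈ S := by
    intro w h0 h1 h2
    rw [hfg w h0 h1 h2]
    exact (g _).2
  have hinj : Function.Injective f := by
    intro w₁ w₂ heq
    by_cases e11 : w₁ = v₁
    · by_cases e21 : w₂ = v₁
      · exact e11.trans e21.symm
      by_cases e22 : w₂ = v₂
      · rw [e11, hf1, e22, hf2] at heq; exact absurd heq hab
      by_cases e20 : w₂ = v₀
      · rw [e11, hf1, e20, hf0] at heq; exact absurd heq.symm hua
      · rw [e11, hf1] at heq; exact absurd heq.symm (hSa _ (hfS w₂ e20 e21 e22))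
    by_cases e12 : w₁ = v₂
    · by_cases e21 : w₂ = v₁
      · rw [e12, hf2, e21, hf1] at heq; exact absurd heq.symm hab
      by_cases e22 : w₂ = v₂
      · exact e12.trans e22.symm
      by_cases e20 : w₂ = v₀
      · rw [e12, hf2, e20, hf0] at heq; exact absurd heq.symm hub
      · rw [e12, hf2] at heq; exact absurd heq.symm (hSb _ (hfS w₂ e20 e21 e22))
    by_cases e10 : w₁ = v₀
    · by_cases e21 : w₂ = v₁
      · rw [e10, hf0, e21, hf1] at heq; exact absurd heq hua
      by_cases e22 : w₂ = v₂
      · rw [e10, hf0, e22, hf2] at heq; exact absurd heq hub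
      by_cases e20 : w₂ = v₀
      · exact e10.trans e20.symm
      · rw [e10, hf0] at heq; exact absurd heq.symm (hSu _ (hfS w₂ e20 e21 e22))
    · by_cases e21 : w₂ = v₁
      · rw [e21, hf1] at heq; exact absurd heq (hSa _ (hfS w₁ e10 e11 e12))
      by_cases e22 : w₂ = v₂
      · rw [e22, hf2] at heq; exact absurd heq (hSb _ (hfS w₁ e10 e11 e12))
      by_cases e20 : w₂ = v₀
      · rw [e20, hf0] at heq; exact absurd heq (hSu _ (hfS w₁ e10 e11 e12))
      · rw [hfg w₁ e10 e11 e12, hfg w₂ e20 e21 e22] at heq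
        have := g.injective (Subtype.ext heq)
        exact congrArg Subtype.val this
  have hclique : ∀ x y : Fin n, x ∈ K → y ∈ K → x ≠ y → (colorGraph c true).Adj x y :=
    fun x y hx hy hxy => hK (Finset.mem_coe.mpr hx) (Finset.mem_coe.mpr hy) hxy
  have hhom : ∀ {w₁ w₂ : W}, H.Adj w₁ w₂ → (colorGraph c true).Adj (f w₁) (f w₂) := by
    intro w₁ w₂ hadj
    by_cases e12 : w₁ = v₂
    · have e21 : w₂ = v₁ := hv2 w₂ (by rw [← e12]; exact hadj)
      rw [e12, hf2, e21, hf1]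
      exact ⟨Ne.symm hab, by rw [Sym2.eq_swap]; exact hcab⟩
    by_cases e22 : w₂ = v₂
    · have e11 : w₁ = v₁ := hv2 w₁ (by rw [← e22]; exact hadj.symm)
      rw [e11, hf1, e22, hf2]
      exact ⟨hab, hcab⟩
    by_cases e11 : w₁ = v₁
    · rcases hv1 w₂ (by rw [← e11]; exact hadj) with e20 | e20
      · rw [e11, hf1, e20, hf0]; exact ⟨Ne.symm hua, hcau⟩
      · exact absurd e20 e22
    by_cases e21 : w₂ = v₁
    · rcases hv1 w₁ (by rw [← e21]; exact hadj.symm) with e10 | e10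
      · rw [e21, hf1, e10, hf0]; exact ⟨hua, by rw [Sym2.eq_swap]; exact hcau⟩
      · exact absurd e10 e12
    by_cases e10 : w₁ = v₀
    · by_cases e20 : w₂ = v₀
      · exact absurd (e10.trans e20.symm) hadj.ne
      · have hm := hfS w₂ e20 e21 e22
        rw [e10, hf0]
        exact hclique u (f w₂) hu (hSK _ hm) (Ne.symm (hSu _ hm))
    by_cases e20 : w₂ = v₀
    · have hm := hfS w₁ e10 e11 e12
      rw [e20, hf0]
      exact hclique (f w₁) u (hSK _ hm) hu (hSu _ hm)
    · have hm1 := hfS w₁ e10 e11 e12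
      have hm2 := hfS w₂ e20 e21 e22
      have hne : f w₁ ≠ f w₂ := fun h => hadj.ne (hinj h)
      exact hclique (f w₁) (f w₂) (hSK _ hm1) (hSK _ hm2) hne
  refine ⟨⟨f, hhom⟩, hinj, s(v₁, v₂), H.mem_edgeSet.mpr h12, ?_⟩
  rw [Sym2.map_pair_eq]
  show s(a, b) = s(f v₁, f v₂)
  rw [hf1, hf2]

/-- The case where one endpoint lies in the clique `K`. -/
lemma inK_blue_copy {W : Type*} [Fintype W] (H : SimpleGraph W) (htail : HasTail H)
    {n : ℕ} (c : Sym2 (Fin n) → Bool) (K : Finset (Fin n))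
    (hK : (colorGraph c true).IsClique ↑K) (hKbig : Fintype.card W ≤ K.card)
    (a b : Fin n) (hab : a ≠ b) (hcab : c s(a,b) = true) (haK : a ∈ K) :
    EdgeInCopy H (colorGraph c true) s(a,b) := by
  classical
  obtain ⟨v₀, v₁, v₂, h01, h12, h02, hv2, hv1⟩ := htail
  have h3 : 3 ≤ Fintype.card W := by
    have hT3 : ({v₀, v₁, v₂} : Finset W).card = 3 :=
      Finset.card_eq_three.mpr ⟨v₀, v₁, v₂, h01.ne, h02, h12.ne, rfl⟩
    calc 3 = ({v₀, v₁, v₂} : Finset W).card := hT3.symm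
    _ ≤ Fintype.card W := Finset.card_le_univ _
  have hne : ((K.erase a).erase b).Nonempty := by
    rw [← Finset.card_pos]
    have h1 : K.card - 1 ≤ (K.erase a).card := Finset.pred_card_le_card_erase
    have h2 : (K.erase a).card - 1 ≤ ((K.erase a).erase b).card :=
      Finset.pred_card_le_card_erase
    omega
  obtain ⟨u, hu⟩ := hne
  have hub : u ≠ b := Finset.ne_of_mem_erase hu
  have hua : u ≠ a := Finset.ne_of_mem_erase (Finset.mem_of_mem_erase hu)
  have huK : u ∈ K := Finset.mem_of_mem_erase (Finset.mem_of_mem_erase hu)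
  have hadj : (colorGraph c true).Adj a u :=
    hK (Finset.mem_coe.mpr haK) (Finset.mem_coe.mpr huK) (Ne.symm hua)
  exact key_blue_copy H ⟨v₀, v₁, v₂, h01, h12, h02, hv2, hv1⟩ c K hK hKbig a b u hab hcab
    huK hua hub hadj.2

/-- Let `H` be a bipartite graph containing a tail, `c` a red-blue coloring of the
edges of `K_n` (`true` = blue, `false` = red), and `K` a blue clique of maximum size
with `|K| ≥ |V(H)|`. Let `Y` be the vertices outside `K` with a blue neighbor in `K`,
and `X` the remaining vertices. Then every blue edge that does not have both endpoints
in `X` is contained in a blue copy of `H`. -/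
theorem blue_nonX_edge_in_blue_copy {W : Type*} [Fintype W] (H : SimpleGraph W)
    (hbip : H.Colorable 2) (htail : HasTail H)
    (n : ℕ) (c : Sym2 (Fin n) → Bool)
    (K : Finset (Fin n)) (hK : (colorGraph c true).IsClique ↑K)
    (hKmax : ∀ K' : Finset (Fin n), (colorGraph c true).IsClique ↑K' → K'.card ≤ K.card)
    (hKbig : Fintype.card W ≤ K.card)
    (Y : Set (Fin n)) (hY : Y = {v | v ∉ K ∧ ∃ u ∈ K, (colorGraph c true).Adj v u})
    (X : Set (Fin n)) (hX : X = {v | v ∉ K ∧ v ∉ Y}) :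
    ∀ e ∈ (colorGraph c true).edgeSet, ¬ (∀ v ∈ e, v ∈ X) →
      EdgeInCopy H (colorGraph c true) e := by
  classical
  have half : ∀ a b : Fin n, (colorGraph c true).Adj a b → a ∉ X →
      EdgeInCopy H (colorGraph c true) s(a, b) := by
    intro a b hadj haX
    obtain ⟨hab, hcab⟩ := hadj
    have hcase : a ∈ K ∨ a ∈ Y := by
      rw [hX] at haX
      simp only [Set.mem_setOf_eq, not_and_or, not_not] at haX
      tauto
    rcases hcase with haK | haY
    · exact inK_blue_copy H htail c K hK hKbig a b hab hcab haK
    · rw [hY] at haY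
      obtain ⟨haK, u, huK, hau, hcau⟩ := haY
      by_cases hub : u = b
      · subst hub
        rw [Sym2.eq_swap]
        exact inK_blue_copy H htail c K hK hKbig u a (Ne.symm hab)
          (by rw [Sym2.eq_swap]; exact hcab) huK
      · exact key_blue_copy H htail c K hK hKbig a b u hab hcab huK (Ne.symm hau) hub hcau
  intro e he hne
  induction e using Sym2.ind with
  | _ x y =>
    have hadj : (colorGraph c true).Adj x y := ((colorGraph c true).mem_edgeSet).mp he
    have hxy : x ∉ X ∨ y ∉ X := by
      by_contra h
      push_neg at h
      exact hne fun v hv => by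
        rcases Sym2.mem_iff.mp hv with rfl | rfl
        exacts [h.1, h.2]
    rcases hxy with hx | hy
    · exact half x y hadj hx
    · rw [Sym2.eq_swap]
      exact half y x hadj.symm hy
end

section
/- Let H be a bipartite graph with bipartition (A,B) containing a tail, such that for every connected component C of H the set V(C) ∩ A is no larger than V(C) ∩ B, and set a = |A|. Let c be a red-blue coloring of the edges of K_n, and let K be a blue clique in K_n of maximum size, with |V(K)| ≥ |V(H)|. Let Y be the set of vertices of K_n outside K that have at least one blue neighbor in V(K), and let X = V(K_n) \ (V(K) ∪ Y). If |X| ≥ a, then every red edge of K_n with one endpoint in X and the other endpoint in V(K) ∪ Y is contained in a red copy of H. -/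
open SimpleGraph

lemma emb_of_ncard_le {α β : Type*} [Fintype α] [Fintype β] (s : Set α) (u : Set β)
    (h : s.ncard ≤ u.ncard) : Nonempty (s ↪ u) := by
  classical
  apply Function.Embedding.nonempty_of_card_le
  rwa [Set.ncard_eq_toFinset_card', Set.ncard_eq_toFinset_card', Set.toFinset_card,
    Set.toFinset_card] at h

lemma master_embed {W : Type*} [Fintype W] (H : SimpleGraph W) (A B : Set W)
    (hAB : ∀ u v, H.Adj u v → (u ∈ A ∧ v ∈ B) ∨ (u ∈ B ∧ v ∈ A))
    (hABd : ∀ w, ¬ (w ∈ A ∧ w ∈ B))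
    (hnAB : ∀ w, w ∉ A → w ∈ B)
    {n : ℕ} (R : SimpleGraph (Fin n)) (X Ks : Set (Fin n))
    (hXK : ∀ p ∈ X, ∀ q ∈ Ks, R.Adj p q)
    (hdisj : ∀ p, ¬ (p ∈ X ∧ p ∈ Ks))
    (T : Set W) (t : W → Fin n) (x' κ : Fin n) (hx : x' ∈ X) (hκ : κ ∈ Ks)
    (a₀ b₀ : W) (ha₀A : a₀ ∈ A) (ha₀T : a₀ ∈ T) (hb₀B : b₀ ∈ B) (hb₀T : b₀ ∈ T)
    (hAX : A.ncard ≤ X.ncard) (hBK : B.ncard ≤ Ks.ncard)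
    (hinj : Set.InjOn t T)
    (hTX : ∀ w ∈ T, t w ∈ X → t w = x')
    (hTK : ∀ w ∈ T, t w ∈ Ks → t w = κ)
    (hTT : ∀ u v, H.Adj u v → u ∈ T → v ∈ T → R.Adj (t u) (t v))
    (hTA : ∀ u v, H.Adj u v → u ∈ T → v ∉ T → v ∈ A → t u ∈ Ks)
    (hTB : ∀ u v, H.Adj u v → u ∈ T → v ∉ T → v ∈ B → t u ∈ X) :
    ∃ g : W → Fin n, Function.Injective g ∧
      (∀ u v, H.Adj u v → R.Adj (g u) (g v)) ∧ ∀ w ∈ T, g w = t w := by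
  classical
  obtain ⟨eA⟩ : Nonempty (↥(A \ T) ↪ ↥(X \ {x'})) := by
    apply emb_of_ncard_le
    calc (A \ T).ncard ≤ (A \ {a₀}).ncard :=
          Set.ncard_le_ncard (Set.diff_subset_diff_right (by simpa using ha₀T))
            (Set.toFinite _)
      _ = A.ncard - 1 := Set.ncard_diff_singleton_of_mem ha₀A
      _ ≤ X.ncard - 1 := Nat.sub_le_sub_right hAX 1
      _ = (X \ {x'}).ncard := (Set.ncard_diff_singleton_of_mem hx).symm
  obtain ⟨eB⟩ : Nonempty (↥(B \ T) ↪ ↥(Ks \ {κ})) := by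
    apply emb_of_ncard_le
    calc (B \ T).ncard ≤ (B \ {b₀}).ncard :=
          Set.ncard_le_ncard (Set.diff_subset_diff_right (by simpa using hb₀T))
            (Set.toFinite _)
      _ = B.ncard - 1 := Set.ncard_diff_singleton_of_mem hb₀B
      _ ≤ Ks.ncard - 1 := Nat.sub_le_sub_right hBK 1
      _ = (Ks \ {κ}).ncard := (Set.ncard_diff_singleton_of_mem hκ).symm
  set g : W → Fin n := fun w =>
    if hw : w ∈ T then t w
    else if hA : w ∈ A then (eA ⟨w, hA, hw⟩ : Fin n)
    else (eB ⟨w, hnAB w hA, hw⟩ : Fin n) with hg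
  have hgT : ∀ w, w ∈ T → g w = t w := by
    intro w hw; simp only [hg]; rw [dif_pos hw]
  have hgAval : ∀ w (hw : w ∉ T) (hA : w ∈ A), g w = (eA ⟨w, hA, hw⟩ : Fin n) := by
    intro w hw hA; simp only [hg]; rw [dif_neg hw, dif_pos hA]
  have hgBval : ∀ w (hw : w ∉ T) (hA : w ∉ A), g w = (eB ⟨w, hnAB w hA, hw⟩ : Fin n) := by
    intro w hw hA; simp only [hg]; rw [dif_neg hw, dif_neg hA]
  have hgA : ∀ w (hw : w ∉ T) (hA : w ∈ A), g w ∈ X \ {x'} := by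
    intro w hw hA; rw [hgAval w hw hA]; exact (eA ⟨w, hA, hw⟩).2
  have hgB : ∀ w (hw : w ∉ T) (hA : w ∉ A), g w ∈ Ks \ {κ} := by
    intro w hw hA; rw [hgBval w hw hA]; exact (eB ⟨w, hnAB w hA, hw⟩).2
  refine ⟨g, ?_, ?_, fun w hw => hgT w hw⟩
  · -- injectivity
    intro u v huv
    by_cases hu : u ∈ T <;> by_cases hv : v ∈ T
    · exact hinj hu hv (by rwa [hgT u hu, hgT v hv] at huv)
    · exfalso
      rw [hgT u hu] at huv
      by_cases hvA : v ∈ A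
      · have h2 := hgA v hv hvA
        rw [← huv] at h2
        exact h2.2 (hTX u hu h2.1)
      · have h2 := hgB v hv hvA
        rw [← huv] at h2
        exact h2.2 (hTK u hu h2.1)
    · exfalso
      rw [hgT v hv] at huv
      by_cases huA : u ∈ A
      · have h2 := hgA u hu huA
        rw [huv] at h2
        exact h2.2 (hTX v hv h2.1)
      · have h2 := hgB u hu huA
        rw [huv] at h2
        exact h2.2 (hTK v hv h2.1)
    · by_cases huA : u ∈ A <;> by_cases hvA : v ∈ A
      · rw [hgAval u hu huA, hgAval v hv hvA] at huv
        have := eA.injective (Subtype.coe_injective huv)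
        exact Subtype.ext_iff.mp this
      · exfalso
        have h1 := (hgA u hu huA).1
        have h2 := (hgB v hv hvA).1
        rw [huv] at h1
        exact hdisj _ ⟨h1, h2⟩
      · exfalso
        have h1 := (hgA v hv hvA).1
        have h2 := (hgB u hu huA).1
        rw [← huv] at h1
        exact hdisj _ ⟨h1, h2⟩
      · rw [hgBval u hu huA, hgBval v hv hvA] at huv
        have := eB.injective (Subtype.coe_injective huv)
        exact Subtype.ext_iff.mp this
  · -- adjacency
    have keyT : ∀ p q, H.Adj p q → p ∈ T → q ∉ T → R.Adj (t p) (g q) := by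
      intro p q hpq hp hq
      by_cases hqA : q ∈ A
      · exact (hXK _ (hgA q hq hqA).1 _ (hTA p q hpq hp hq hqA)).symm
      · exact hXK _ (hTB p q hpq hp hq (hnAB q hqA)) _ (hgB q hq hqA).1
    intro u v h
    by_cases hu : u ∈ T <;> by_cases hv : v ∈ T
    · rw [hgT u hu, hgT v hv]; exact hTT u v h hu hv
    · rw [hgT u hu]; exact keyT u v h hu hv
    · rw [hgT v hv]; exact (keyT v u h.symm hv hu).symm
    · rcases hAB u v h with ⟨huA, hvB⟩ | ⟨huB, hvA⟩
      · exact hXK _ (hgA u hu huA).1 _ (hgB v hv (fun hvA => hABd v ⟨hvA, hvB⟩)).1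
      · exact (hXK _ (hgA v hv hvA).1 _ (hgB u hu (fun huA => hABd u ⟨huA, huB⟩)).1).symm

/-- Let `H` be a bipartite graph with bipartition `(A, B)` containing a tail, with every
connected component having at most as many vertices in `A` as in `B`, and set `a = |A|`.
Let `c` be a red-blue coloring of the edges of `K_n` (`true` = blue, `false` = red) and
`K` a blue clique of maximum size with `|K| ≥ |V(H)|`. Let `Y` be the vertices outside
`K` with a blue neighbor in `K`, and `X` the remaining vertices. If `|X| ≥ a`, then
every red edge with one endpoint in `X` and the other in `K ∪ Y` is contained in a red
copy of `H`. -/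
theorem red_X_edge_in_red_copy {W : Type*} [Fintype W] (H : SimpleGraph W)
    (A B : Set W) (hpart : ∀ w, w ∈ A ↔ w ∉ B)
    (hbip : ∀ u v, H.Adj u v → ¬ (u ∈ A ∧ v ∈ A) ∧ ¬ (u ∈ B ∧ v ∈ B))
    (hcomp : ∀ C : H.ConnectedComponent, (C.supp ∩ A).ncard ≤ (C.supp ∩ B).ncard)
    (htail : HasTail H)
    (n : ℕ) (c : Sym2 (Fin n) → Bool)
    (K : Finset (Fin n)) (hK : (colorGraph c true).IsClique ↑K)
    (hKmax : ∀ K' : Finset (Fin n), (colorGraph c true).IsClique ↑K' → K'.card ≤ K.card)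
    (hKbig : Fintype.card W ≤ K.card)
    (Y : Set (Fin n)) (hY : Y = {v | v ∉ K ∧ ∃ u ∈ K, (colorGraph c true).Adj v u})
    (X : Set (Fin n)) (hX : X = {v | v ∉ K ∧ v ∉ Y})
    (hXa : A.ncard ≤ X.ncard) :
    ∀ e ∈ (colorGraph c false).edgeSet,
      (∃ x y : Fin n, e = s(x, y) ∧ x ∈ X ∧ y ∈ ↑K ∪ Y) →
      EdgeInCopy H (colorGraph c false) e := by
  classical
  have hABd : ∀ w, ¬ (w ∈ A ∧ w ∈ B) := fun w ⟨h1, h2⟩ => (hpart w).mp h1 h2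
  have hnAB : ∀ w, w ∉ A → w ∈ B := fun w h => by
    by_contra hB; exact h ((hpart w).mpr hB)
  have hAB : ∀ u v, H.Adj u v → (u ∈ A ∧ v ∈ B) ∨ (u ∈ B ∧ v ∈ A) := by
    intro u v h
    obtain ⟨h1, h2⟩ := hbip u v h
    by_cases huA : u ∈ A
    · exact Or.inl ⟨huA, hnAB v (fun hvA => h1 ⟨huA, hvA⟩)⟩
    · refine Or.inr ⟨hnAB u huA, ?_⟩
      by_contra hvA
      exact h2 ⟨hnAB u huA, hnAB v hvA⟩
  have hXmem : ∀ p : Fin n, p ∈ X ↔ (p ∉ K ∧ p ∉ Y) := fun p => by rw [hX]; exact Iff.rfl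
  have hYmem : ∀ p : Fin n, p ∈ Y ↔ (p ∉ K ∧ ∃ u ∈ K, (colorGraph c true).Adj p u) :=
    fun p => by rw [hY]; exact Iff.rfl
  have hdisjXK : ∀ p : Fin n, ¬ (p ∈ X ∧ p ∈ (K : Set (Fin n))) :=
    fun p ⟨h1, h2⟩ => ((hXmem p).mp h1).1 (Finset.mem_coe.mp h2)
  have hXKred : ∀ p ∈ X, ∀ q ∈ (K : Set (Fin n)), (colorGraph c false).Adj p q := by
    intro p hp q hq
    have hp' := (hXmem p).mp hp
    have hq' : q ∈ K := Finset.mem_coe.mp hq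
    have hne : p ≠ q := fun h => hp'.1 (h ▸ hq')
    refine ⟨hne, ?_⟩
    rcases Bool.eq_false_or_eq_true (c s(p, q)) with h | h
    · exact absurd ((hYmem p).mpr ⟨hp'.1, q, hq', hne, h⟩) hp'.2
    · exact h
  have hBK : B.ncard ≤ ((K : Set (Fin n))).ncard := by
    rw [Set.ncard_coe_finset]
    calc B.ncard ≤ (Set.univ : Set W).ncard :=
          Set.ncard_le_ncard (Set.subset_univ _) (Set.toFinite _)
      _ = Fintype.card W := by rw [Set.ncard_univ, Nat.card_eq_fintype_card]
      _ ≤ K.card := hKbig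
  have hYred : ∀ p ∈ Y, ∃ k ∈ K, (colorGraph c false).Adj p k := by
    intro p hp
    have hp' := (hYmem p).mp hp
    by_contra hcon
    push_neg at hcon
    have hblue : ∀ k ∈ K, (colorGraph c true).Adj p k := by
      intro k hk
      have hne : p ≠ k := fun h => hp'.1 (h ▸ hk)
      refine ⟨hne, ?_⟩
      rcases Bool.eq_false_or_eq_true (c s(p, k)) with h | h
      · exact h
      · exact absurd ⟨hne, h⟩ (hcon k hk)
    have hclique : (colorGraph c true).IsClique ↑(insert p K) := by
      intro a ha b hb hab
      simp only [Finset.coe_insert, Set.mem_insert_iff, Finset.mem_coe] at ha hb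
      rcases ha with rfl | haK
      · rcases hb with rfl | hbK
        · exact absurd rfl hab
        · exact hblue b hbK
      · rcases hb with rfl | hbK
        · exact (hblue a haK).symm
        · exact hK (Finset.mem_coe.mpr haK) (Finset.mem_coe.mpr hbK) hab
    have := hKmax _ hclique
    rw [Finset.card_insert_of_notMem hp'.1] at this
    omega
  intro e he hexy
  obtain ⟨xx, yy, rfl, hxX, hyKY⟩ := hexy
  rw [SimpleGraph.mem_edgeSet] at he
  obtain ⟨v₀, v₁, v₂, h01, h12, h02, hleaf, hdeg⟩ := htail
  have hne01 : v₀ ≠ v₁ := h01.ne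
  have hne12 : v₁ ≠ v₂ := h12.ne
  have hxX' := (hXmem xx).mp hxX
  have finish : ∀ (p q : W) (g : W → Fin n), H.Adj p q → Function.Injective g →
      (∀ u v, H.Adj u v → (colorGraph c false).Adj (g u) (g v)) →
      g p = xx → g q = yy → EdgeInCopy H (colorGraph c false) s(xx, yy) := by
    intro p q g hpq hginj hgadj hgp hgq
    refine ⟨⟨g, fun {u v} h => hgadj u v h⟩, hginj, s(p, q), hpq, ?_⟩
    rw [Sym2.map_pair_eq]
    show s(xx, yy) = s(g p, g q)
    rw [hgp, hgq]
  rcases hyKY with hyK | hyY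
  · -- Case: yy ∈ K
    have hne_xy : xx ≠ yy := fun h => hdisjXK xx ⟨hxX, h ▸ hyK⟩
    by_cases hv1A : v₁ ∈ A
    · -- v₁ ∈ A, v₂ ∈ B
      have hv2B : v₂ ∈ B := ((hAB v₁ v₂ h12).resolve_right (fun h => hABd v₁ ⟨hv1A, h.1⟩)).2
      have hv0B : v₀ ∈ B := ((hAB v₀ v₁ h01).resolve_left (fun h => hABd v₁ ⟨hv1A, h.2⟩)).1
      set T1 : Set W := {v₁, v₂} with hT1
      set t1 : W → Fin n := fun w => if w = v₁ then xx else yy with ht1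
      have htv1 : t1 v₁ = xx := by simp [ht1]
      have htv2 : t1 v₂ = yy := by simp [ht1, Ne.symm hne12]
      have hmemT : ∀ w, w ∈ T1 ↔ (w = v₁ ∨ w = v₂) := by
        intro w; simp [hT1]
      have hm1 : v₁ ∈ T1 := (hmemT v₁).mpr (Or.inl rfl)
      have hm2 : v₂ ∈ T1 := (hmemT v₂).mpr (Or.inr rfl)
      have c_inj : Set.InjOn t1 T1 := by
        intro a ha b hb hab
        rcases (hmemT a).mp ha with rfl | rfl <;> rcases (hmemT b).mp hb with rfl | rfl
        · rfl
        · rw [htv1, htv2] at hab; exact absurd hab hne_xy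
        · rw [htv1, htv2] at hab; exact absurd hab.symm hne_xy
        · rfl
      have c_TX : ∀ w ∈ T1, t1 w ∈ X → t1 w = xx := by
        intro w hw hwX
        rcases (hmemT w).mp hw with rfl | rfl
        · exact htv1
        · rw [htv2] at hwX ⊢; exact absurd ⟨hwX, hyK⟩ (hdisjXK yy)
      have c_TK : ∀ w ∈ T1, t1 w ∈ (K : Set (Fin n)) → t1 w = yy := by
        intro w hw hwK
        rcases (hmemT w).mp hw with rfl | rfl
        · rw [htv1] at hwK ⊢; exact absurd ⟨hxX, hwK⟩ (hdisjXK xx)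
        · exact htv2
      have c_TT : ∀ u v, H.Adj u v → u ∈ T1 → v ∈ T1 →
          (colorGraph c false).Adj (t1 u) (t1 v) := by
        intro u v h hu hv
        rcases (hmemT u).mp hu with rfl | rfl <;> rcases (hmemT v).mp hv with rfl | rfl
        · exact absurd rfl h.ne
        · rw [htv1, htv2]; exact he
        · rw [htv1, htv2]; exact he.symm
        · exact absurd rfl h.ne
      have c_TA : ∀ u v, H.Adj u v → u ∈ T1 → v ∉ T1 → v ∈ A →
          t1 u ∈ (K : Set (Fin n)) := by
        intro u v h hu hv hvA
        rcases (hmemT u).mp hu with rfl | rfl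
        · rcases hdeg v h with h' | h'
          · rw [h'] at hvA; exact absurd ⟨hvA, hv0B⟩ (hABd v₀)
          · exact absurd ((hmemT v).mpr (Or.inr h')) hv
        · exact absurd ((hmemT v).mpr (Or.inl (hleaf v h))) hv
      have c_TB : ∀ u v, H.Adj u v → u ∈ T1 → v ∉ T1 → v ∈ B → t1 u ∈ X := by
        intro u v h hu hv hvB
        rcases (hmemT u).mp hu with rfl | rfl
        · rw [htv1]; exact hxX
        · exact absurd ((hmemT v).mpr (Or.inl (hleaf v h))) hv
      obtain ⟨g, hginj, hgadj, hgT⟩ := master_embed H A B hAB hABd hnAB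
        (colorGraph c false) X (↑K) hXKred hdisjXK T1 t1 xx yy hxX hyK
        v₁ v₂ hv1A hm1 hv2B hm2 hXa hBK c_inj c_TX c_TK c_TT c_TA c_TB
      exact finish v₁ v₂ g h12 hginj hgadj
        ((hgT v₁ hm1).trans htv1) ((hgT v₂ hm2).trans htv2)
    · -- v₁ ∈ B, v₂ ∈ A
      have hv1B : v₁ ∈ B := hnAB v₁ hv1A
      have hv2A : v₂ ∈ A := ((hAB v₁ v₂ h12).resolve_left (fun h => hABd v₁ ⟨h.1, hv1B⟩)).2
      have hv0A : v₀ ∈ A := ((hAB v₀ v₁ h01).resolve_right (fun h => hABd v₁ ⟨h.2, hv1B⟩)).1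
      set T1 : Set W := {v₁, v₂} with hT1
      set t1 : W → Fin n := fun w => if w = v₂ then xx else yy with ht1
      have htv2 : t1 v₂ = xx := by simp [ht1]
      have htv1 : t1 v₁ = yy := by simp [ht1, hne12]
      have hmemT : ∀ w, w ∈ T1 ↔ (w = v₁ ∨ w = v₂) := by
        intro w; simp [hT1]
      have hm1 : v₁ ∈ T1 := (hmemT v₁).mpr (Or.inl rfl)
      have hm2 : v₂ ∈ T1 := (hmemT v₂).mpr (Or.inr rfl)
      have c_inj : Set.InjOn t1 T1 := by
        intro a ha b hb hab
        rcases (hmemT a).mp ha with rfl | rfl <;> rcases (hmemT b).mp hb with rfl | rfl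
        · rfl
        · rw [htv1, htv2] at hab; exact absurd hab.symm hne_xy
        · rw [htv1, htv2] at hab; exact absurd hab hne_xy
        · rfl
      have c_TX : ∀ w ∈ T1, t1 w ∈ X → t1 w = xx := by
        intro w hw hwX
        rcases (hmemT w).mp hw with rfl | rfl
        · rw [htv1] at hwX ⊢; exact absurd ⟨hwX, hyK⟩ (hdisjXK yy)
        · exact htv2
      have c_TK : ∀ w ∈ T1, t1 w ∈ (K : Set (Fin n)) → t1 w = yy := by
        intro w hw hwK
        rcases (hmemT w).mp hw with rfl | rfl
        · exact htv1
        · rw [htv2] at hwK ⊢; exact absurd ⟨hxX, hwK⟩ (hdisjXK xx)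
      have c_TT : ∀ u v, H.Adj u v → u ∈ T1 → v ∈ T1 →
          (colorGraph c false).Adj (t1 u) (t1 v) := by
        intro u v h hu hv
        rcases (hmemT u).mp hu with rfl | rfl <;> rcases (hmemT v).mp hv with rfl | rfl
        · exact absurd rfl h.ne
        · rw [htv1, htv2]; exact he.symm
        · rw [htv1, htv2]; exact he
        · exact absurd rfl h.ne
      have c_TA : ∀ u v, H.Adj u v → u ∈ T1 → v ∉ T1 → v ∈ A →
          t1 u ∈ (K : Set (Fin n)) := by
        intro u v h hu hv hvA
        rcases (hmemT u).mp hu with rfl | rfl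
        · rw [htv1]; exact hyK
        · exact absurd ((hmemT v).mpr (Or.inl (hleaf v h))) hv
      have c_TB : ∀ u v, H.Adj u v → u ∈ T1 → v ∉ T1 → v ∈ B → t1 u ∈ X := by
        intro u v h hu hv hvB
        rcases (hmemT u).mp hu with rfl | rfl
        · rcases hdeg v h with h' | h'
          · rw [h'] at hvB; exact absurd ⟨hv0A, hvB⟩ (hABd v₀)
          · exact absurd ((hmemT v).mpr (Or.inr h')) hv
        · exact absurd ((hmemT v).mpr (Or.inl (hleaf v h))) hv
      obtain ⟨g, hginj, hgadj, hgT⟩ := master_embed H A B hAB hABd hnAB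
        (colorGraph c false) X (↑K) hXKred hdisjXK T1 t1 xx yy hxX hyK
        v₂ v₁ hv2A hm2 hv1B hm1 hXa hBK c_inj c_TX c_TK c_TT c_TA c_TB
      exact finish v₂ v₁ g h12.symm hginj hgadj
        ((hgT v₂ hm2).trans htv2) ((hgT v₁ hm1).trans htv1)
  · -- Case: yy ∈ Y
    have hyNK : yy ∉ K := ((hYmem yy).mp hyY).1
    obtain ⟨k, hkK, hyk⟩ := hYred yy hyY
    have hkK' : k ∈ (K : Set (Fin n)) := Finset.mem_coe.mpr hkK
    have hxNY : xx ∉ Y := hxX'.2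
    have hne_xy : xx ≠ yy := fun h => hxNY (h ▸ hyY)
    have hne_yk : yy ≠ k := fun h => hyNK (h ▸ hkK)
    have hne_xk : xx ≠ k := fun h => hdisjXK xx ⟨hxX, h ▸ hkK'⟩
    have hyNX : yy ∉ X := fun h => ((hXmem yy).mp h).2 hyY
    have hkNX : k ∉ X := fun h => hdisjXK k ⟨h, hkK'⟩
    by_cases hv1A : v₁ ∈ A
    · -- v₁ ∈ A, v₀ v₂ ∈ B : map v₂ ↦ xx, v₁ ↦ yy, v₀ ↦ k
      have hv2B : v₂ ∈ B := ((hAB v₁ v₂ h12).resolve_right (fun h => hABd v₁ ⟨hv1A, h.1⟩)).2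
      have hv0B : v₀ ∈ B := ((hAB v₀ v₁ h01).resolve_left (fun h => hABd v₁ ⟨hv1A, h.2⟩)).1
      set T1 : Set W := {v₀, v₁, v₂} with hT1
      set t1 : W → Fin n := fun w => if w = v₂ then xx else if w = v₁ then yy else k with ht1
      have htv2 : t1 v₂ = xx := by simp [ht1]
      have htv1 : t1 v₁ = yy := by simp [ht1, hne12]
      have htv0 : t1 v₀ = k := by simp [ht1, h02, hne01]
      have hmemT : ∀ w, w ∈ T1 ↔ (w = v₀ ∨ w = v₁ ∨ w = v₂) := by
        intro w; simp [hT1]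
      have hm0 : v₀ ∈ T1 := (hmemT v₀).mpr (Or.inl rfl)
      have hm1 : v₁ ∈ T1 := (hmemT v₁).mpr (Or.inr (Or.inl rfl))
      have hm2 : v₂ ∈ T1 := (hmemT v₂).mpr (Or.inr (Or.inr rfl))
      have c_inj : Set.InjOn t1 T1 := by
        intro a ha b hb hab
        rcases (hmemT a).mp ha with rfl | rfl | rfl <;>
          rcases (hmemT b).mp hb with rfl | rfl | rfl
        · rfl
        · rw [htv0, htv1] at hab; exact absurd hab.symm hne_yk
        · rw [htv0, htv2] at hab; exact absurd hab.symm hne_xk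
        · rw [htv1, htv0] at hab; exact absurd hab hne_yk
        · rfl
        · rw [htv1, htv2] at hab; exact absurd hab.symm hne_xy
        · rw [htv2, htv0] at hab; exact absurd hab hne_xk
        · rw [htv2, htv1] at hab; exact absurd hab hne_xy
        · rfl
      have c_TX : ∀ w ∈ T1, t1 w ∈ X → t1 w = xx := by
        intro w hw hwX
        rcases (hmemT w).mp hw with rfl | rfl | rfl
        · rw [htv0] at hwX ⊢; exact absurd hwX hkNX
        · rw [htv1] at hwX ⊢; exact absurd hwX hyNX
        · exact htv2
      have c_TK : ∀ w ∈ T1, t1 w ∈ (K : Set (Fin n)) → t1 w = k := by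
        intro w hw hwK
        rcases (hmemT w).mp hw with rfl | rfl | rfl
        · exact htv0
        · rw [htv1] at hwK ⊢; exact absurd (Finset.mem_coe.mp hwK) hyNK
        · rw [htv2] at hwK ⊢; exact absurd ⟨hxX, hwK⟩ (hdisjXK xx)
      have c_TT : ∀ u v, H.Adj u v → u ∈ T1 → v ∈ T1 →
          (colorGraph c false).Adj (t1 u) (t1 v) := by
        intro u v h hu hv
        rcases (hmemT u).mp hu with rfl | rfl | rfl <;>
          rcases (hmemT v).mp hv with rfl | rfl | rfl
        · exact absurd rfl h.ne
        · rw [htv0, htv1]; exact hyk.symm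
        · exact absurd (hleaf _ h.symm) hne01
        · rw [htv1, htv0]; exact hyk
        · exact absurd rfl h.ne
        · rw [htv1, htv2]; exact he.symm
        · exact absurd (hleaf _ h) hne01
        · rw [htv2, htv1]; exact he
        · exact absurd rfl h.ne
      have c_TA : ∀ u v, H.Adj u v → u ∈ T1 → v ∉ T1 → v ∈ A →
          t1 u ∈ (K : Set (Fin n)) := by
        intro u v h hu hv hvA
        rcases (hmemT u).mp hu with rfl | rfl | rfl
        · rw [htv0]; exact hkK'
        · rcases hdeg v h with h' | h'
          · exact absurd ((hmemT v).mpr (Or.inl h')) hv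
          · exact absurd ((hmemT v).mpr (Or.inr (Or.inr h'))) hv
        · exact absurd ((hmemT v).mpr (Or.inr (Or.inl (hleaf v h)))) hv
      have c_TB : ∀ u v, H.Adj u v → u ∈ T1 → v ∉ T1 → v ∈ B → t1 u ∈ X := by
        intro u v h hu hv hvB
        rcases (hmemT u).mp hu with rfl | rfl | rfl
        · rcases hAB _ v h with ⟨h1, _⟩ | ⟨_, h2⟩
          · exact absurd ⟨h1, hv0B⟩ (hABd _)
          · exact absurd ⟨h2, hvB⟩ (hABd v)
        · rcases hdeg v h with h' | h'
          · exact absurd ((hmemT v).mpr (Or.inl h')) hv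
          · exact absurd ((hmemT v).mpr (Or.inr (Or.inr h'))) hv
        · exact absurd ((hmemT v).mpr (Or.inr (Or.inl (hleaf v h)))) hv
      obtain ⟨g, hginj, hgadj, hgT⟩ := master_embed H A B hAB hABd hnAB
        (colorGraph c false) X (↑K) hXKred hdisjXK T1 t1 xx k hxX hkK'
        v₁ v₂ hv1A hm1 hv2B hm2 hXa hBK c_inj c_TX c_TK c_TT c_TA c_TB
      exact finish v₂ v₁ g h12.symm hginj hgadj
        ((hgT v₂ hm2).trans htv2) ((hgT v₁ hm1).trans htv1)
    · -- v₁ ∈ B, v₀ v₂ ∈ A : map v₀ ↦ xx, v₁ ↦ yy, v₂ ↦ k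
      have hv1B : v₁ ∈ B := hnAB v₁ hv1A
      have hv2A : v₂ ∈ A := ((hAB v₁ v₂ h12).resolve_left (fun h => hABd v₁ ⟨h.1, hv1B⟩)).2
      have hv0A : v₀ ∈ A := ((hAB v₀ v₁ h01).resolve_right (fun h => hABd v₁ ⟨h.2, hv1B⟩)).1
      set T1 : Set W := {v₀, v₁, v₂} with hT1
      set t1 : W → Fin n := fun w => if w = v₀ then xx else if w = v₁ then yy else k with ht1
      have htv0 : t1 v₀ = xx := by simp [ht1]
      have htv1 : t1 v₁ = yy := by simp [ht1, Ne.symm hne01]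
      have htv2 : t1 v₂ = k := by simp [ht1, Ne.symm h02, Ne.symm hne12]
      have hmemT : ∀ w, w ∈ T1 ↔ (w = v₀ ∨ w = v₁ ∨ w = v₂) := by
        intro w; simp [hT1]
      have hm0 : v₀ ∈ T1 := (hmemT v₀).mpr (Or.inl rfl)
      have hm1 : v₁ ∈ T1 := (hmemT v₁).mpr (Or.inr (Or.inl rfl))
      have hm2 : v₂ ∈ T1 := (hmemT v₂).mpr (Or.inr (Or.inr rfl))
      have c_inj : Set.InjOn t1 T1 := by
        intro a ha b hb hab
        rcases (hmemT a).mp ha with rfl | rfl | rfl <;>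
          rcases (hmemT b).mp hb with rfl | rfl | rfl
        · rfl
        · rw [htv0, htv1] at hab; exact absurd hab hne_xy
        · rw [htv0, htv2] at hab; exact absurd hab hne_xk
        · rw [htv1, htv0] at hab; exact absurd hab.symm hne_xy
        · rfl
        · rw [htv1, htv2] at hab; exact absurd hab hne_yk
        · rw [htv2, htv0] at hab; exact absurd hab.symm hne_xk
        · rw [htv2, htv1] at hab; exact absurd hab.symm hne_yk
        · rfl
      have c_TX : ∀ w ∈ T1, t1 w ∈ X → t1 w = xx := by
        intro w hw hwX
        rcases (hmemT w).mp hw with rfl | rfl | rfl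
        · exact htv0
        · rw [htv1] at hwX ⊢; exact absurd hwX hyNX
        · rw [htv2] at hwX ⊢; exact absurd hwX hkNX
      have c_TK : ∀ w ∈ T1, t1 w ∈ (K : Set (Fin n)) → t1 w = k := by
        intro w hw hwK
        rcases (hmemT w).mp hw with rfl | rfl | rfl
        · rw [htv0] at hwK ⊢; exact absurd ⟨hxX, hwK⟩ (hdisjXK xx)
        · rw [htv1] at hwK ⊢; exact absurd (Finset.mem_coe.mp hwK) hyNK
        · exact htv2
      have c_TT : ∀ u v, H.Adj u v → u ∈ T1 → v ∈ T1 →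
          (colorGraph c false).Adj (t1 u) (t1 v) := by
        intro u v h hu hv
        rcases (hmemT u).mp hu with rfl | rfl | rfl <;>
          rcases (hmemT v).mp hv with rfl | rfl | rfl
        · exact absurd rfl h.ne
        · rw [htv0, htv1]; exact he
        · exact absurd (hleaf _ h.symm) hne01
        · rw [htv1, htv0]; exact he.symm
        · exact absurd rfl h.ne
        · rw [htv1, htv2]; exact hyk
        · exact absurd (hleaf _ h) hne01
        · rw [htv2, htv1]; exact hyk.symm
        · exact absurd rfl h.ne
      have c_TA : ∀ u v, H.Adj u v → u ∈ T1 → v ∉ T1 → v ∈ A →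
          t1 u ∈ (K : Set (Fin n)) := by
        intro u v h hu hv hvA
        rcases (hmemT u).mp hu with rfl | rfl | rfl
        · rcases hAB _ v h with ⟨_, h2⟩ | ⟨h1, _⟩
          · exact absurd ⟨hvA, h2⟩ (hABd v)
          · exact absurd ⟨hv0A, h1⟩ (hABd _)
        · rcases hdeg v h with h' | h'
          · exact absurd ((hmemT v).mpr (Or.inl h')) hv
          · exact absurd ((hmemT v).mpr (Or.inr (Or.inr h'))) hv
        · exact absurd ((hmemT v).mpr (Or.inr (Or.inl (hleaf v h)))) hv
      have c_TB : ∀ u v, H.Adj u v → u ∈ T1 → v ∉ T1 → v ∈ B → t1 u ∈ X := by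
        intro u v h hu hv hvB
        rcases (hmemT u).mp hu with rfl | rfl | rfl
        · rw [htv0]; exact hxX
        · rcases hdeg v h with h' | h'
          · exact absurd ((hmemT v).mpr (Or.inl h')) hv
          · exact absurd ((hmemT v).mpr (Or.inr (Or.inr h'))) hv
        · exact absurd ((hmemT v).mpr (Or.inr (Or.inl (hleaf v h)))) hv
      obtain ⟨g, hginj, hgadj, hgT⟩ := master_embed H A B hAB hABd hnAB
        (colorGraph c false) X (↑K) hXKred hdisjXK T1 t1 xx k hxX hkK'
        v₀ v₁ hv0A hm0 hv1B hm1 hXa hBK c_inj c_TX c_TK c_TT c_TA c_TB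
      exact finish v₀ v₁ g h01 hginj hgadj
        ((hgT v₀ hm0).trans htv0) ((hgT v₁ hm1).trans htv1)
end
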